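/- Let γ, Γ be measures on (0,∞) with γ(A) ≤ Γ(A) for all Borel A, 0 < ∫ min(r,r²) dγ ≤ ∫ min(r,r²) dΓ < ∞, and suppose (∫_ε^1 r dγ) ∧ (∫_1^{1/ε} r² dγ) > 0 for all small ε > 0, and that limsup_{ε→0⁺} (∫_ε^1 r dΓ)/(∫_ε^1 r dγ) < ∞ and limsup_{ε→0⁺} (∫_1^{1/ε} r² dΓ)/(∫_1^{1/ε} r² dγ) < ∞. Then there exists K ≥ 1 such that J_Γ(b) ≤ K·J_γ(b) for all b ≥ 0, where J_μ(b) = ∫₀^∞ (e^{-br} - 1 + br) dμ(r). -/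

import Mathlib

open Real MeasureTheory Set Filter
open scoped ENNReal

lemma aux_f_nonneg (x : ℝ) : 0 ≤ Real.exp (-x) - 1 + x := by
  nlinarith [Real.add_one_le_exp (-x)]

lemma aux_f_le (x : ℝ) (hx : 0 ≤ x) : Real.exp (-x) - 1 + x ≤ min x (x^2) := by
  have h3 : Real.exp (-x) * Real.exp x = 1 := by rw [← Real.exp_add]; simp
  have h1 : Real.exp (-x) * (1 + x) ≤ 1 := by
    nlinarith [Real.add_one_le_exp x, Real.exp_pos (-x)]
  rcases le_total x 1 with h | h
  · rw [min_eq_right (by nlinarith)]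
    nlinarith [aux_f_nonneg x]
  · rw [min_eq_left (by nlinarith)]
    nlinarith [Real.exp_pos (-x)]

lemma aux_f_ge (x : ℝ) (hx : 0 ≤ x) : min x (x^2) ≤ 4 * (Real.exp (-x) - 1 + x) := by
  rcases le_total x 2 with h | h
  · have h1 : (1 : ℝ) - x/2 ≤ Real.exp (-(x/2)) := by nlinarith [Real.add_one_le_exp (-(x/2))]
    have h2 : Real.exp (-(x/2)) * Real.exp (-(x/2)) = Real.exp (-x) := by
      rw [← Real.exp_add]; ring_nf
    have h3 : (1 - x/2)^2 ≤ Real.exp (-x) := by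
      nlinarith [Real.exp_pos (-(x/2)), sq_nonneg (Real.exp (-(x/2)) - (1 - x/2))]
    have h4 : x^2/4 ≤ Real.exp (-x) - 1 + x := by nlinarith
    rcases le_total x 1 with h5 | h5
    · rw [min_eq_right (by nlinarith)]; nlinarith
    · rw [min_eq_left (by nlinarith)]; nlinarith
  · rw [min_eq_left (by nlinarith)]
    nlinarith [Real.exp_pos (-x)]

lemma aux_min_up (b r : ℝ) (hb : 0 ≤ b) (hr : 0 ≤ r) :
    min (b*r) ((b*r)^2) ≤ max b (b^2) * min r (r^2) := by
  rcases le_total r 1 with h | h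
  · rw [show min r (r^2) = r^2 from min_eq_right (by nlinarith)]
    calc min (b*r) ((b*r)^2) ≤ (b*r)^2 := min_le_right _ _
    _ ≤ max b (b^2) * r^2 := by nlinarith [le_max_right b (b^2), sq_nonneg r]
  · rw [show min r (r^2) = r from min_eq_left (by nlinarith)]
    calc min (b*r) ((b*r)^2) ≤ b*r := min_le_left _ _
    _ ≤ max b (b^2) * r := by nlinarith [le_max_left b (b^2)]

lemma aux_min_lo (b r : ℝ) (hb : 0 ≤ b) (hr : 0 ≤ r) :
    min b (b^2) * min r (r^2) ≤ min (b*r) ((b*r)^2) := by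
  have h0 : 0 ≤ min r (r^2) := le_min hr (sq_nonneg r)
  have h0' : 0 ≤ min b (b^2) := le_min hb (sq_nonneg b)
  refine le_min ?_ ?_
  · exact mul_le_mul (min_le_left _ _) (min_le_left _ _) h0 hb
  · calc min b (b^2) * min r (r^2) ≤ b^2 * r^2 :=
        mul_le_mul (min_le_right _ _) (min_le_right _ _) h0 (sq_nonneg b)
    _ = (b*r)^2 := by ring

lemma aux_fin (μ : Measure ℝ) (hfin : ∫⁻ r, ENNReal.ofReal (min r (r^2)) ∂μ < ⊤)
    (c : ℝ≥0∞) (hc : c ≠ ⊤) (s : Set ℝ) (hs : MeasurableSet s) (g : ℝ → ℝ≥0∞)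
    (hg : ∀ r ∈ s, g r ≤ c * ENNReal.ofReal (min r (r^2))) :
    ∫⁻ r in s, g r ∂μ < ⊤ := by
  calc ∫⁻ r in s, g r ∂μ ≤ ∫⁻ r in s, c * ENNReal.ofReal (min r (r^2)) ∂μ :=
      setLIntegral_mono' hs hg
  _ = c * ∫⁻ r in s, ENNReal.ofReal (min r (r^2)) ∂μ := lintegral_const_mul' c _ hc
  _ ≤ c * ∫⁻ r, ENNReal.ofReal (min r (r^2)) ∂μ := by
      exact mul_le_mul_right (setLIntegral_le_lintegral s _) c
  _ < ⊤ := ENNReal.mul_lt_top hc.lt_top hfin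

lemma aux_meas_Ioc_lt_top (μ : Measure ℝ) (hfin : ∫⁻ r, ENNReal.ofReal (min r (r^2)) ∂μ < ⊤)
    (a b : ℝ) (ha : 0 < a) : μ (Ioc a b) < ⊤ := by
  have hmin : 0 < min a (a^2) := lt_min ha (by positivity)
  have h1 : ENNReal.ofReal (min a (a^2)) * μ (Ioc a b) < ⊤ := by
    rw [← setLIntegral_const (Ioc a b) (ENNReal.ofReal (min a (a^2)))]
    apply aux_fin μ hfin 1 ENNReal.one_ne_top _ measurableSet_Ioc
    intro r hr
    rw [one_mul]
    exact ENNReal.ofReal_le_ofReal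
      (min_le_min hr.1.le (by nlinarith [hr.1, hr.1.le, ha.le]))
  by_contra h
  push_neg at h
  rw [top_le_iff.1 h, ENNReal.mul_top (by
    simp only [ne_eq, ENNReal.ofReal_eq_zero, not_le]
    exact hmin)] at h1
  exact absurd h1 (by simp)

lemma aux_sigmaFinite (μ : Measure ℝ) (h0 : μ (Iic 0) = 0)
    (hfin : ∫⁻ r, ENNReal.ofReal (min r (r^2)) ∂μ < ⊤) : SigmaFinite μ := by
  constructor
  constructor
  refine ⟨fun n => Iic 0 ∪ Ioc (1/(n+1)) (n+1), fun _ => trivial, fun n => ?_, ?_⟩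
  · calc μ (Iic 0 ∪ Ioc (1/(n+1):ℝ) (n+1)) ≤ μ (Iic 0) + μ (Ioc (1/(n+1):ℝ) (n+1)) :=
        measure_union_le _ _
    _ < ⊤ := by
        rw [h0, zero_add]
        exact aux_meas_Ioc_lt_top μ hfin _ _ (by positivity)
  · ext x
    simp only [mem_iUnion, mem_univ, iff_true, mem_union, mem_Iic, mem_Ioc]
    rcases le_or_gt x 0 with h | h
    · exact ⟨0, Or.inl h⟩
    · obtain ⟨n, hn⟩ := exists_nat_gt (max x x⁻¹)
      refine ⟨n, Or.inr ⟨?_, ?_⟩⟩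
      · rw [div_lt_iff₀ (by positivity)]
        have hx : x⁻¹ < n + 1 := lt_trans (lt_of_le_of_lt (le_max_right _ _) hn) (by linarith)
        calc (1:ℝ) = x * x⁻¹ := by field_simp
        _ < x * (n+1) := by
            apply mul_lt_mul_of_pos_left hx h
      · exact le_trans (le_of_lt (lt_of_le_of_lt (le_max_left _ _) hn)) (by linarith)

lemma aux_small (μ ν : Measure ℝ) [SigmaFinite μ] [SigmaFinite ν] (C : ℝ≥0∞) (hC : C ≠ ⊤)
    (s : ℝ) (hs : 0 < s) (hs1 : s ≤ 1)
    (hratio : ∀ t : ℝ, 0 < t → t < s →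
      ∫⁻ r in Ioc t 1, ENNReal.ofReal r ∂μ ≤ C * ∫⁻ r in Ioc t 1, ENNReal.ofReal r ∂ν) :
    ∫⁻ r in Ioc 0 s, ENNReal.ofReal (r^2) ∂μ ≤
      C * (ENNReal.ofReal s * (∫⁻ r in Ioc s 1, ENNReal.ofReal r ∂ν)
           + ∫⁻ r in Ioc 0 s, ENNReal.ofReal (r^2) ∂ν) := by
  set F : ℝ × ℝ → ℝ≥0∞ := fun p => if 0 < p.2 ∧ p.2 < p.1 then ENNReal.ofReal p.1 else 0 with hF
  have hFmeas : Measurable F := by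
    apply Measurable.ite
    · exact (measurableSet_lt measurable_const measurable_snd).inter
        (measurableSet_lt measurable_snd measurable_fst)
    · exact ENNReal.measurable_ofReal.comp measurable_fst
    · exact measurable_const
  have key : ∀ r : ℝ, r ∈ Ioc 0 s →
      ∫⁻ t in Ioo 0 s, F (r, t) ∂volume = ENNReal.ofReal (r^2) := by
    intro r hr
    have h1 : (fun t => F (r, t)) = (Ioo 0 r).indicator (fun _ => ENNReal.ofReal r) := by
      funext t
      simp only [hF, Set.indicator_apply, mem_Ioo]
    rw [h1, lintegral_indicator measurableSet_Ioo, setLIntegral_const,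
      Measure.restrict_apply measurableSet_Ioo,
      inter_eq_left.2 (Ioo_subset_Ioo_right hr.2), Real.volume_Ioo]
    rw [← ENNReal.ofReal_mul hr.1.le]
    norm_num [sq]
  have swap : ∀ ρ : Measure ℝ, SigmaFinite ρ →
      ∫⁻ r in Ioc 0 s, ENNReal.ofReal (r^2) ∂ρ
        = ∫⁻ t in Ioo 0 s, ∫⁻ r in Ioc 0 s, F (r, t) ∂ρ ∂volume := by
    intro ρ hρ
    have h1 : ∫⁻ r in Ioc 0 s, ENNReal.ofReal (r^2) ∂ρ
        = ∫⁻ r in Ioc 0 s, ∫⁻ t in Ioo 0 s, F (r, t) ∂volume ∂ρ :=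
      (setLIntegral_congr_fun_ae measurableSet_Ioc
        (Filter.Eventually.of_forall (fun r hr => (key r hr).symm)))
    rw [h1]
    exact lintegral_lintegral_swap (hFmeas.aemeasurable)
  have inner_eq : ∀ ρ : Measure ℝ, ∀ t : ℝ, t ∈ Ioo 0 s →
      ∫⁻ r in Ioc 0 s, F (r, t) ∂ρ = ∫⁻ r in Ioc t s, ENNReal.ofReal r ∂ρ := by
    intro ρ t ht
    have h1 : (fun r => F (r, t)) = (Ioi t).indicator (fun r => ENNReal.ofReal r) := by
      funext r
      simp only [hF, Set.indicator_apply, mem_Ioi]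
      by_cases h : t < r
      · simp [h, ht.1]
      · simp [h]
    have h2 : Ioi t ∩ Ioc 0 s = Ioc t s := by
      ext x
      simp only [mem_inter_iff, mem_Ioi, mem_Ioc]
      constructor
      · rintro ⟨ha, _, hc⟩; exact ⟨ha, hc⟩
      · rintro ⟨ha, hb⟩; exact ⟨ha, lt_trans ht.1 ha, hb⟩
    rw [h1, lintegral_indicator measurableSet_Ioi, Measure.restrict_restrict measurableSet_Ioi, h2]
  -- now the chain
  have hAν := fun (t : ℝ) (ht : t ∈ Ioo 0 s) => by
    have hsplit : ∫⁻ r in Ioc t 1, ENNReal.ofReal r ∂ν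
        = (∫⁻ r in Ioc t s, ENNReal.ofReal r ∂ν) + ∫⁻ r in Ioc s 1, ENNReal.ofReal r ∂ν := by
      rw [← lintegral_union measurableSet_Ioc (Ioc_disjoint_Ioc_of_le le_rfl),
        Ioc_union_Ioc_eq_Ioc ht.2.le hs1]
    exact hsplit
  have main : ∫⁻ t in Ioo 0 s, ∫⁻ r in Ioc 0 s, F (r, t) ∂μ ∂volume ≤
      ∫⁻ t in Ioo 0 s, (C * ∫⁻ r in Ioc 0 s, F (r, t) ∂ν
        + C * ∫⁻ r in Ioc s 1, ENNReal.ofReal r ∂ν) ∂volume := by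
    apply setLIntegral_mono' measurableSet_Ioo
    intro t ht
    calc ∫⁻ r in Ioc 0 s, F (r, t) ∂μ = ∫⁻ r in Ioc t s, ENNReal.ofReal r ∂μ := inner_eq μ t ht
    _ ≤ ∫⁻ r in Ioc t 1, ENNReal.ofReal r ∂μ :=
        lintegral_mono_set (Ioc_subset_Ioc_right hs1)
    _ ≤ C * ∫⁻ r in Ioc t 1, ENNReal.ofReal r ∂ν := hratio t ht.1 ht.2
    _ = C * ∫⁻ r in Ioc t s, ENNReal.ofReal r ∂ν + C * ∫⁻ r in Ioc s 1, ENNReal.ofReal r ∂ν := by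
        rw [hAν t ht, mul_add]
    _ = C * ∫⁻ r in Ioc 0 s, F (r, t) ∂ν + C * ∫⁻ r in Ioc s 1, ENNReal.ofReal r ∂ν := by
        rw [inner_eq ν t ht]
  calc ∫⁻ r in Ioc 0 s, ENNReal.ofReal (r^2) ∂μ
      = ∫⁻ t in Ioo 0 s, ∫⁻ r in Ioc 0 s, F (r, t) ∂μ ∂volume := swap μ ‹_›
    _ ≤ ∫⁻ t in Ioo 0 s, (C * ∫⁻ r in Ioc 0 s, F (r, t) ∂ν
        + C * ∫⁻ r in Ioc s 1, ENNReal.ofReal r ∂ν) ∂volume := main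
    _ = C * (∫⁻ t in Ioo 0 s, ∫⁻ r in Ioc 0 s, F (r, t) ∂ν ∂volume)
        + (C * ∫⁻ r in Ioc s 1, ENNReal.ofReal r ∂ν) * volume (Ioo 0 s) := by
        rw [lintegral_add_right _ measurable_const, setLIntegral_const,
          lintegral_const_mul' C _ hC]
    _ = C * (∫⁻ r in Ioc 0 s, ENNReal.ofReal (r^2) ∂ν)
        + (C * ∫⁻ r in Ioc s 1, ENNReal.ofReal r ∂ν) * ENNReal.ofReal s := by
        rw [← swap ν ‹_›, Real.volume_Ioo, sub_zero]
    _ = C * (ENNReal.ofReal s * (∫⁻ r in Ioc s 1, ENNReal.ofReal r ∂ν)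
           + ∫⁻ r in Ioc 0 s, ENNReal.ofReal (r^2) ∂ν) := by ring

lemma aux_tail (μ ν : Measure ℝ) [SigmaFinite μ] [SigmaFinite ν] (C : ℝ≥0∞) (hC : C ≠ ⊤)
    (s : ℝ) (hs : 1 ≤ s)
    (hratio : ∀ t : ℝ, s < t →
      ∫⁻ r in Ioc 1 t, ENNReal.ofReal (r^2) ∂μ ≤ C * ∫⁻ r in Ioc 1 t, ENNReal.ofReal (r^2) ∂ν) :
    ∫⁻ r in Ioi s, ENNReal.ofReal r ∂μ ≤
      C * (ENNReal.ofReal s⁻¹ * (∫⁻ r in Ioc 1 s, ENNReal.ofReal (r^2) ∂ν)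
           + ∫⁻ r in Ioi s, ENNReal.ofReal r ∂ν) := by
  have hs0 : (0:ℝ) < s := lt_of_lt_of_le one_pos hs
  set G : ℝ × ℝ → ℝ≥0∞ :=
    fun p => if 0 < p.2 ∧ p.2 ≤ p.1⁻¹ then ENNReal.ofReal (p.1^2) else 0 with hG
  have hGmeas : Measurable G := by
    apply Measurable.ite
    · exact (measurableSet_lt measurable_const measurable_snd).inter
        (measurableSet_le measurable_snd measurable_fst.inv)
    · exact ENNReal.measurable_ofReal.comp (measurable_fst.pow_const 2)
    · exact measurable_const
  have key : ∀ r : ℝ, r ∈ Ioi s →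
      ∫⁻ u in Ioo 0 s⁻¹, G (r, u) ∂volume = ENNReal.ofReal r := by
    intro r hr
    have hr0 : (0:ℝ) < r := lt_trans hs0 hr
    have hinv : r⁻¹ < s⁻¹ := by
      rw [inv_lt_inv₀ hr0 hs0]; exact hr
    have h1 : (fun u => G (r, u)) = (Ioc 0 r⁻¹).indicator (fun _ => ENNReal.ofReal (r^2)) := by
      funext u
      simp only [hG, Set.indicator_apply, mem_Ioc]
    rw [h1, lintegral_indicator measurableSet_Ioc, setLIntegral_const,
      Measure.restrict_apply measurableSet_Ioc]
    have h2 : Ioc 0 r⁻¹ ∩ Ioo 0 s⁻¹ = Ioc 0 r⁻¹ := by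
      apply inter_eq_left.2
      intro x hx
      exact ⟨hx.1, lt_of_le_of_lt hx.2 hinv⟩
    rw [h2, Real.volume_Ioc, sub_zero, ← ENNReal.ofReal_mul (sq_nonneg r)]
    congr 1
    field_simp [hr0.ne']
  have swap : ∀ ρ : Measure ℝ, SigmaFinite ρ →
      ∫⁻ r in Ioi s, ENNReal.ofReal r ∂ρ
        = ∫⁻ u in Ioo 0 s⁻¹, ∫⁻ r in Ioi s, G (r, u) ∂ρ ∂volume := by
    intro ρ hρ
    have h1 : ∫⁻ r in Ioi s, ENNReal.ofReal r ∂ρ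
        = ∫⁻ r in Ioi s, ∫⁻ u in Ioo 0 s⁻¹, G (r, u) ∂volume ∂ρ :=
      (setLIntegral_congr_fun_ae measurableSet_Ioi
        (Filter.Eventually.of_forall (fun r hr => (key r hr).symm)))
    rw [h1]
    exact lintegral_lintegral_swap (hGmeas.aemeasurable)
  have inner_eq : ∀ ρ : Measure ℝ, ∀ u : ℝ, u ∈ Ioo 0 s⁻¹ →
      ∫⁻ r in Ioi s, G (r, u) ∂ρ = ∫⁻ r in Ioc s u⁻¹, ENNReal.ofReal (r^2) ∂ρ := by
    intro ρ u hu
    have h1 : (fun r => G (r, u)) = {r : ℝ | u ≤ r⁻¹}.indicator (fun r => ENNReal.ofReal (r^2)) := by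
      funext r
      simp only [hG, Set.indicator_apply, mem_setOf_eq]
      by_cases h : u ≤ r⁻¹
      · simp [h, hu.1]
      · simp [h]
    have h2 : {r : ℝ | u ≤ r⁻¹} ∩ Ioi s = Ioc s u⁻¹ := by
      ext x
      simp only [mem_inter_iff, mem_setOf_eq, mem_Ioi, mem_Ioc]
      constructor
      · rintro ⟨ha, hb⟩
        exact ⟨hb, (le_inv_comm₀ hu.1 (lt_trans hs0 hb)).1 ha⟩
      · rintro ⟨ha, hb⟩
        exact ⟨(le_inv_comm₀ hu.1 (lt_trans hs0 ha)).2 hb, ha⟩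
    rw [h1, lintegral_indicator (measurableSet_le measurable_const measurable_inv),
      Measure.restrict_restrict (measurableSet_le measurable_const measurable_inv), h2]
  have main : ∫⁻ u in Ioo 0 s⁻¹, ∫⁻ r in Ioi s, G (r, u) ∂μ ∂volume ≤
      ∫⁻ u in Ioo 0 s⁻¹, (C * ∫⁻ r in Ioi s, G (r, u) ∂ν
        + C * ∫⁻ r in Ioc 1 s, ENNReal.ofReal (r^2) ∂ν) ∂volume := by
    apply setLIntegral_mono' measurableSet_Ioo
    intro u hu
    have hsu : s < u⁻¹ := (lt_inv_comm₀ hu.1 hs0).1 hu.2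
    have hsplit : ∫⁻ r in Ioc 1 u⁻¹, ENNReal.ofReal (r^2) ∂ν
        = (∫⁻ r in Ioc 1 s, ENNReal.ofReal (r^2) ∂ν)
          + ∫⁻ r in Ioc s u⁻¹, ENNReal.ofReal (r^2) ∂ν := by
      rw [← lintegral_union measurableSet_Ioc (Ioc_disjoint_Ioc_of_le le_rfl),
        Ioc_union_Ioc_eq_Ioc hs hsu.le]
    calc ∫⁻ r in Ioi s, G (r, u) ∂μ
        = ∫⁻ r in Ioc s u⁻¹, ENNReal.ofReal (r^2) ∂μ := inner_eq μ u hu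
      _ ≤ ∫⁻ r in Ioc 1 u⁻¹, ENNReal.ofReal (r^2) ∂μ :=
          lintegral_mono_set (Ioc_subset_Ioc_left hs)
      _ ≤ C * ∫⁻ r in Ioc 1 u⁻¹, ENNReal.ofReal (r^2) ∂ν := hratio u⁻¹ hsu
      _ = C * ∫⁻ r in Ioc s u⁻¹, ENNReal.ofReal (r^2) ∂ν
          + C * ∫⁻ r in Ioc 1 s, ENNReal.ofReal (r^2) ∂ν := by
          rw [hsplit, mul_add]; ring
      _ = C * ∫⁻ r in Ioi s, G (r, u) ∂ν + C * ∫⁻ r in Ioc 1 s, ENNReal.ofReal (r^2) ∂ν := by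
          rw [inner_eq ν u hu]
  calc ∫⁻ r in Ioi s, ENNReal.ofReal r ∂μ
      = ∫⁻ u in Ioo 0 s⁻¹, ∫⁻ r in Ioi s, G (r, u) ∂μ ∂volume := swap μ ‹_›
    _ ≤ ∫⁻ u in Ioo 0 s⁻¹, (C * ∫⁻ r in Ioi s, G (r, u) ∂ν
        + C * ∫⁻ r in Ioc 1 s, ENNReal.ofReal (r^2) ∂ν) ∂volume := main
    _ = C * (∫⁻ u in Ioo 0 s⁻¹, ∫⁻ r in Ioi s, G (r, u) ∂ν ∂volume)
        + (C * ∫⁻ r in Ioc 1 s, ENNReal.ofReal (r^2) ∂ν) * volume (Ioo 0 s⁻¹) := by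
        rw [lintegral_add_right _ measurable_const, setLIntegral_const,
          lintegral_const_mul' C _ hC]
    _ = C * (∫⁻ r in Ioi s, ENNReal.ofReal r ∂ν)
        + (C * ∫⁻ r in Ioc 1 s, ENNReal.ofReal (r^2) ∂ν) * ENNReal.ofReal s⁻¹ := by
        rw [← swap ν ‹_›, Real.volume_Ioo, sub_zero]
    _ = C * (ENNReal.ofReal s⁻¹ * (∫⁻ r in Ioc 1 s, ENNReal.ofReal (r^2) ∂ν)
           + ∫⁻ r in Ioi s, ENNReal.ofReal r ∂ν) := by ring

lemma aux_min_eq_sq {x : ℝ} (h0 : 0 ≤ x) (h1 : x ≤ 1) : min x (x^2) = x^2 :=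
  min_eq_right (by nlinarith)

lemma aux_min_eq_lin {x : ℝ} (h1 : 1 ≤ x) : min x (x^2) = x :=
  min_eq_left (by nlinarith)

lemma aux_split3 (μ : Measure ℝ) (hμr : μ.restrict (Ioi 0) = μ) (g : ℝ → ℝ≥0∞)
    (a c : ℝ) (h0a : 0 < a) (hac : a ≤ c) :
    ∫⁻ r, g r ∂μ = (∫⁻ r in Ioc 0 a, g r ∂μ + ∫⁻ r in Ioc a c, g r ∂μ)
      + ∫⁻ r in Ioi c, g r ∂μ := by
  conv_lhs => rw [← hμr]
  rw [show Ioi (0:ℝ) = Ioc 0 c ∪ Ioi c from (Ioc_union_Ioi_eq_Ioi (h0a.le.trans hac)).symm,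
    lintegral_union measurableSet_Ioi (Ioc_disjoint_Ioi le_rfl),
    show Ioc (0:ℝ) c = Ioc 0 a ∪ Ioc a c from (Ioc_union_Ioc_eq_Ioc h0a.le hac).symm,
    lintegral_union measurableSet_Ioc (Ioc_disjoint_Ioc_of_le le_rfl)]

lemma aux_large (γ Γ : Measure ℝ) [SigmaFinite γ] [SigmaFinite Γ]
    (hΓr : Γ.restrict (Ioi 0) = Γ)
    (C : ℝ≥0∞) (hC : C ≠ ⊤) (δ ε₁ : ℝ) (hε₁ : 0 < ε₁) (hε₁δ : ε₁ < δ) (hδ1 : δ ≤ 1)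
    (hA : ∀ ε : ℝ, 0 < ε → ε < δ →
      ∫⁻ r in Ioc ε 1, ENNReal.ofReal r ∂Γ ≤ C * ∫⁻ r in Ioc ε 1, ENNReal.ofReal r ∂γ)
    (ha₁ : (∫⁻ r in Ioc ε₁ 1, ENNReal.ofReal r ∂γ) ≠ 0)
    (ha₁' : (∫⁻ r in Ioc ε₁ 1, ENNReal.ofReal r ∂γ) ≠ ⊤)
    (b : ℝ) (hb : ε₁⁻¹ < b) :
    ∫⁻ r, ENNReal.ofReal (min (b*r) ((b*r)^2)) ∂Γ ≤
      ((∫⁻ r in Ioi 1, ENNReal.ofReal r ∂Γ) / (∫⁻ r in Ioc ε₁ 1, ENNReal.ofReal r ∂γ) + 3*C)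
        * ∫⁻ r, ENNReal.ofReal (min (b*r) ((b*r)^2)) ∂γ := by
  have hb0 : (0:ℝ) < b := lt_trans (by positivity) hb
  set s : ℝ := b⁻¹ with hsdef
  have hs0 : 0 < s := by positivity
  have hsε₁ : s < ε₁ := by
    rw [hsdef, inv_lt_comm₀ hb0 hε₁]
    exact hb
  have hs1 : s ≤ 1 := le_of_lt (lt_of_lt_of_le (lt_trans hsε₁ hε₁δ) hδ1)
  have hbs : b * s = 1 := by rw [hsdef]; exact mul_inv_cancel₀ hb0.ne'
  set Iγ := ∫⁻ r, ENNReal.ofReal (min (b*r) ((b*r)^2)) ∂γ with hIγ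
  -- lower bounds for Iγ
  have low1 : ENNReal.ofReal b * (∫⁻ r in Ioc s 1, ENNReal.ofReal r ∂γ) ≤ Iγ := by
    rw [← lintegral_const_mul' _ _ ENNReal.ofReal_ne_top]
    calc ∫⁻ r in Ioc s 1, ENNReal.ofReal b * ENNReal.ofReal r ∂γ
        = ∫⁻ r in Ioc s 1, ENNReal.ofReal (min (b*r) ((b*r)^2)) ∂γ := by
          apply setLIntegral_congr_fun_ae measurableSet_Ioc
          apply Filter.Eventually.of_forall
          intro r hr
          rw [← ENNReal.ofReal_mul hb0.le, aux_min_eq_lin]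
          rw [← hbs]
          exact mul_le_mul_of_nonneg_left hr.1.le hb0.le
      _ ≤ Iγ := setLIntegral_le_lintegral _ _
  have low2 : ENNReal.ofReal (b^2) * (∫⁻ r in Ioc 0 s, ENNReal.ofReal (r^2) ∂γ) ≤ Iγ := by
    rw [← lintegral_const_mul' _ _ ENNReal.ofReal_ne_top]
    calc ∫⁻ r in Ioc 0 s, ENNReal.ofReal (b^2) * ENNReal.ofReal (r^2) ∂γ
        = ∫⁻ r in Ioc 0 s, ENNReal.ofReal (min (b*r) ((b*r)^2)) ∂γ := by
          apply setLIntegral_congr_fun_ae measurableSet_Ioc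
          apply Filter.Eventually.of_forall
          intro r hr
          rw [← ENNReal.ofReal_mul (sq_nonneg b), aux_min_eq_sq (mul_pos hb0 hr.1).le
            (by rw [← hbs]; exact mul_le_mul_of_nonneg_left hr.2 hb0.le)]
          congr 1
          ring
      _ ≤ Iγ := setLIntegral_le_lintegral _ _
  -- split the Γ integral
  rw [aux_split3 Γ hΓr _ s 1 hs0 hs1]
  -- piece 1
  have hp1 : ∫⁻ r in Ioc 0 s, ENNReal.ofReal (min (b*r) ((b*r)^2)) ∂Γ ≤ C * Iγ + C * Iγ := by
    have h1 : ∫⁻ r in Ioc 0 s, ENNReal.ofReal (min (b*r) ((b*r)^2)) ∂Γ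
        ≤ ENNReal.ofReal (b^2) * ∫⁻ r in Ioc 0 s, ENNReal.ofReal (r^2) ∂Γ := by
      rw [← lintegral_const_mul' _ _ ENNReal.ofReal_ne_top]
      apply setLIntegral_mono' measurableSet_Ioc
      intro r hr
      rw [← ENNReal.ofReal_mul (sq_nonneg b)]
      apply ENNReal.ofReal_le_ofReal
      calc min (b*r) ((b*r)^2) ≤ (b*r)^2 := min_le_right _ _
      _ = b^2 * r^2 := by ring
    have h2 := aux_small Γ γ C hC s hs0 hs1 (fun t ht hts =>
      hA t ht (lt_trans (lt_trans hts hsε₁) hε₁δ))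
    calc ∫⁻ r in Ioc 0 s, ENNReal.ofReal (min (b*r) ((b*r)^2)) ∂Γ
        ≤ ENNReal.ofReal (b^2) * (C * (ENNReal.ofReal s * (∫⁻ r in Ioc s 1, ENNReal.ofReal r ∂γ)
           + ∫⁻ r in Ioc 0 s, ENNReal.ofReal (r^2) ∂γ)) :=
          le_trans h1 (mul_le_mul_right h2 _)
      _ = C * ((ENNReal.ofReal (b^2) * ENNReal.ofReal s) * (∫⁻ r in Ioc s 1, ENNReal.ofReal r ∂γ))
          + C * (ENNReal.ofReal (b^2) * ∫⁻ r in Ioc 0 s, ENNReal.ofReal (r^2) ∂γ) := by ring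
      _ = C * (ENNReal.ofReal b * (∫⁻ r in Ioc s 1, ENNReal.ofReal r ∂γ))
          + C * (ENNReal.ofReal (b^2) * ∫⁻ r in Ioc 0 s, ENNReal.ofReal (r^2) ∂γ) := by
          rw [← ENNReal.ofReal_mul (sq_nonneg b)]
          have hb2s : b^2 * s = b := by
            rw [hsdef, sq, mul_assoc, mul_inv_cancel₀ hb0.ne', mul_one]
          rw [hb2s]
      _ ≤ C * Iγ + C * Iγ := add_le_add (mul_le_mul_right low1 C) (mul_le_mul_right low2 C)
  -- piece 2
  have hp2 : ∫⁻ r in Ioc s 1, ENNReal.ofReal (min (b*r) ((b*r)^2)) ∂Γ ≤ C * Iγ := by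
    calc ∫⁻ r in Ioc s 1, ENNReal.ofReal (min (b*r) ((b*r)^2)) ∂Γ
        ≤ ∫⁻ r in Ioc s 1, ENNReal.ofReal b * ENNReal.ofReal r ∂Γ := by
          apply setLIntegral_mono' measurableSet_Ioc
          intro r hr
          rw [← ENNReal.ofReal_mul hb0.le]
          exact ENNReal.ofReal_le_ofReal (min_le_left _ _)
      _ = ENNReal.ofReal b * ∫⁻ r in Ioc s 1, ENNReal.ofReal r ∂Γ :=
          lintegral_const_mul' _ _ ENNReal.ofReal_ne_top
      _ ≤ ENNReal.ofReal b * (C * ∫⁻ r in Ioc s 1, ENNReal.ofReal r ∂γ) :=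
          mul_le_mul_right (hA s hs0 (lt_trans hsε₁ hε₁δ)) _
      _ = C * (ENNReal.ofReal b * ∫⁻ r in Ioc s 1, ENNReal.ofReal r ∂γ) := by ring
      _ ≤ C * Iγ := mul_le_mul_right low1 C
  -- piece 3
  have hp3 : ∫⁻ r in Ioi 1, ENNReal.ofReal (min (b*r) ((b*r)^2)) ∂Γ ≤
      ((∫⁻ r in Ioi 1, ENNReal.ofReal r ∂Γ) / (∫⁻ r in Ioc ε₁ 1, ENNReal.ofReal r ∂γ)) * Iγ := by
    set Q := ∫⁻ r in Ioi 1, ENNReal.ofReal r ∂Γ with hQ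
    set a₁ := ∫⁻ r in Ioc ε₁ 1, ENNReal.ofReal r ∂γ with ha₁def
    calc ∫⁻ r in Ioi 1, ENNReal.ofReal (min (b*r) ((b*r)^2)) ∂Γ
        ≤ ∫⁻ r in Ioi 1, ENNReal.ofReal b * ENNReal.ofReal r ∂Γ := by
          apply setLIntegral_mono' measurableSet_Ioi
          intro r hr
          rw [← ENNReal.ofReal_mul hb0.le]
          exact ENNReal.ofReal_le_ofReal (min_le_left _ _)
      _ = ENNReal.ofReal b * Q := lintegral_const_mul' _ _ ENNReal.ofReal_ne_top
      _ = ENNReal.ofReal b * ((Q / a₁) * a₁) := by rw [ENNReal.div_mul_cancel ha₁ ha₁']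
      _ ≤ ENNReal.ofReal b * ((Q / a₁) * (∫⁻ r in Ioc s 1, ENNReal.ofReal r ∂γ)) := by
          apply mul_le_mul_right
          apply mul_le_mul_right
          exact lintegral_mono_set (Ioc_subset_Ioc_left hsε₁.le)
      _ = (Q / a₁) * (ENNReal.ofReal b * (∫⁻ r in Ioc s 1, ENNReal.ofReal r ∂γ)) := by ring
      _ ≤ (Q / a₁) * Iγ := mul_le_mul_right low1 _
  calc (∫⁻ r in Ioc 0 s, ENNReal.ofReal (min (b*r) ((b*r)^2)) ∂Γ
        + ∫⁻ r in Ioc s 1, ENNReal.ofReal (min (b*r) ((b*r)^2)) ∂Γ)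
      + ∫⁻ r in Ioi 1, ENNReal.ofReal (min (b*r) ((b*r)^2)) ∂Γ
      ≤ ((C * Iγ + C * Iγ) + C * Iγ)
        + ((∫⁻ r in Ioi 1, ENNReal.ofReal r ∂Γ) / (∫⁻ r in Ioc ε₁ 1, ENNReal.ofReal r ∂γ)) * Iγ :=
        add_le_add (add_le_add hp1 hp2) hp3
    _ = ((∫⁻ r in Ioi 1, ENNReal.ofReal r ∂Γ) / (∫⁻ r in Ioc ε₁ 1, ENNReal.ofReal r ∂γ) + 3*C)
        * Iγ := by ring

lemma aux_smallb (γ Γ : Measure ℝ) [SigmaFinite γ] [SigmaFinite Γ]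
    (hΓr : Γ.restrict (Ioi 0) = Γ)
    (C : ℝ≥0∞) (hC : C ≠ ⊤) (δ ε₁ : ℝ) (hε₁ : 0 < ε₁) (hε₁δ : ε₁ < δ) (hδ1 : δ ≤ 1)
    (hB : ∀ ε : ℝ, 0 < ε → ε < δ →
      ∫⁻ r in Ioc 1 ε⁻¹, ENNReal.ofReal (r^2) ∂Γ ≤ C * ∫⁻ r in Ioc 1 ε⁻¹, ENNReal.ofReal (r^2) ∂γ)
    (hb₁ : (∫⁻ r in Ioc 1 ε₁⁻¹, ENNReal.ofReal (r^2) ∂γ) ≠ 0)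
    (hb₁' : (∫⁻ r in Ioc 1 ε₁⁻¹, ENNReal.ofReal (r^2) ∂γ) ≠ ⊤)
    (b : ℝ) (hb0 : 0 < b) (hbε₁ : b < ε₁) :
    ∫⁻ r, ENNReal.ofReal (min (b*r) ((b*r)^2)) ∂Γ ≤
      ((∫⁻ r in Ioc 0 1, ENNReal.ofReal (r^2) ∂Γ) / (∫⁻ r in Ioc 1 ε₁⁻¹, ENNReal.ofReal (r^2) ∂γ)
        + 3*C) * ∫⁻ r, ENNReal.ofReal (min (b*r) ((b*r)^2)) ∂γ := by
  set u : ℝ := b⁻¹ with hudef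
  have hu0 : 0 < u := by positivity
  have hbδ : b < δ := lt_trans hbε₁ hε₁δ
  have hb1 : b < 1 := lt_of_lt_of_le hbδ hδ1
  have hu1 : 1 < u := by
    rw [hudef]
    exact (one_lt_inv₀ hb0).2 hb1
  have huε : ε₁⁻¹ < u := by
    rw [hudef]
    exact (inv_lt_inv₀ hε₁ hb0).2 hbε₁
  have hbu : b * u = 1 := by rw [hudef]; exact mul_inv_cancel₀ hb0.ne'
  set Iγ := ∫⁻ r, ENNReal.ofReal (min (b*r) ((b*r)^2)) ∂γ with hIγ
  -- lower bounds
  have low2 : ENNReal.ofReal (b^2) * (∫⁻ r in Ioc 1 u, ENNReal.ofReal (r^2) ∂γ) ≤ Iγ := by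
    rw [← lintegral_const_mul' _ _ ENNReal.ofReal_ne_top]
    calc ∫⁻ r in Ioc 1 u, ENNReal.ofReal (b^2) * ENNReal.ofReal (r^2) ∂γ
        = ∫⁻ r in Ioc 1 u, ENNReal.ofReal (min (b*r) ((b*r)^2)) ∂γ := by
          apply setLIntegral_congr_fun_ae measurableSet_Ioc
          apply Filter.Eventually.of_forall
          intro r hr
          have hr0 : (0:ℝ) < r := lt_trans one_pos hr.1
          rw [← ENNReal.ofReal_mul (sq_nonneg b), aux_min_eq_sq (mul_pos hb0 hr0).le
            (by rw [← hbu]; exact mul_le_mul_of_nonneg_left hr.2 hb0.le)]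
          congr 1
          ring
      _ ≤ Iγ := setLIntegral_le_lintegral _ _
  have low3 : ENNReal.ofReal b * (∫⁻ r in Ioi u, ENNReal.ofReal r ∂γ) ≤ Iγ := by
    rw [← lintegral_const_mul' _ _ ENNReal.ofReal_ne_top]
    calc ∫⁻ r in Ioi u, ENNReal.ofReal b * ENNReal.ofReal r ∂γ
        = ∫⁻ r in Ioi u, ENNReal.ofReal (min (b*r) ((b*r)^2)) ∂γ := by
          apply setLIntegral_congr_fun_ae measurableSet_Ioi
          apply Filter.Eventually.of_forall
          intro r hr
          rw [← ENNReal.ofReal_mul hb0.le, aux_min_eq_lin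
            (by rw [← hbu]; exact mul_le_mul_of_nonneg_left (le_of_lt hr) hb0.le)]
      _ ≤ Iγ := setLIntegral_le_lintegral _ _
  rw [aux_split3 Γ hΓr _ 1 u one_pos hu1.le]
  -- piece 1
  have hp1 : ∫⁻ r in Ioc 0 1, ENNReal.ofReal (min (b*r) ((b*r)^2)) ∂Γ ≤
      ((∫⁻ r in Ioc 0 1, ENNReal.ofReal (r^2) ∂Γ)
        / (∫⁻ r in Ioc 1 ε₁⁻¹, ENNReal.ofReal (r^2) ∂γ)) * Iγ := by
    set P := ∫⁻ r in Ioc 0 1, ENNReal.ofReal (r^2) ∂Γ with hP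
    set b₁ := ∫⁻ r in Ioc 1 ε₁⁻¹, ENNReal.ofReal (r^2) ∂γ with hb₁def
    calc ∫⁻ r in Ioc 0 1, ENNReal.ofReal (min (b*r) ((b*r)^2)) ∂Γ
        ≤ ∫⁻ r in Ioc 0 1, ENNReal.ofReal (b^2) * ENNReal.ofReal (r^2) ∂Γ := by
          apply setLIntegral_mono' measurableSet_Ioc
          intro r hr
          rw [← ENNReal.ofReal_mul (sq_nonneg b)]
          apply ENNReal.ofReal_le_ofReal
          calc min (b*r) ((b*r)^2) ≤ (b*r)^2 := min_le_right _ _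
          _ = b^2 * r^2 := by ring
      _ = ENNReal.ofReal (b^2) * P := lintegral_const_mul' _ _ ENNReal.ofReal_ne_top
      _ = ENNReal.ofReal (b^2) * ((P / b₁) * b₁) := by rw [ENNReal.div_mul_cancel hb₁ hb₁']
      _ ≤ ENNReal.ofReal (b^2) * ((P / b₁) * (∫⁻ r in Ioc 1 u, ENNReal.ofReal (r^2) ∂γ)) := by
          apply mul_le_mul_right
          apply mul_le_mul_right
          exact lintegral_mono_set (Ioc_subset_Ioc_right huε.le)
      _ = (P / b₁) * (ENNReal.ofReal (b^2) * (∫⁻ r in Ioc 1 u, ENNReal.ofReal (r^2) ∂γ)) := by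
          ring
      _ ≤ (P / b₁) * Iγ := mul_le_mul_right low2 _
  -- piece 2
  have hp2 : ∫⁻ r in Ioc 1 u, ENNReal.ofReal (min (b*r) ((b*r)^2)) ∂Γ ≤ C * Iγ := by
    have hBb := hB b hb0 hbδ
    rw [← hudef] at hBb
    calc ∫⁻ r in Ioc 1 u, ENNReal.ofReal (min (b*r) ((b*r)^2)) ∂Γ
        ≤ ∫⁻ r in Ioc 1 u, ENNReal.ofReal (b^2) * ENNReal.ofReal (r^2) ∂Γ := by
          apply setLIntegral_mono' measurableSet_Ioc
          intro r hr
          rw [← ENNReal.ofReal_mul (sq_nonneg b)]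
          apply ENNReal.ofReal_le_ofReal
          calc min (b*r) ((b*r)^2) ≤ (b*r)^2 := min_le_right _ _
          _ = b^2 * r^2 := by ring
      _ = ENNReal.ofReal (b^2) * ∫⁻ r in Ioc 1 u, ENNReal.ofReal (r^2) ∂Γ :=
          lintegral_const_mul' _ _ ENNReal.ofReal_ne_top
      _ ≤ ENNReal.ofReal (b^2) * (C * ∫⁻ r in Ioc 1 u, ENNReal.ofReal (r^2) ∂γ) :=
          mul_le_mul_right hBb _
      _ = C * (ENNReal.ofReal (b^2) * ∫⁻ r in Ioc 1 u, ENNReal.ofReal (r^2) ∂γ) := by ring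
      _ ≤ C * Iγ := mul_le_mul_right low2 C
  -- piece 3
  have hp3 : ∫⁻ r in Ioi u, ENNReal.ofReal (min (b*r) ((b*r)^2)) ∂Γ ≤ C * Iγ + C * Iγ := by
    have hratio' : ∀ t : ℝ, u < t →
        ∫⁻ r in Ioc 1 t, ENNReal.ofReal (r^2) ∂Γ ≤ C * ∫⁻ r in Ioc 1 t, ENNReal.ofReal (r^2) ∂γ := by
      intro t ht
      have ht0 : 0 < t := lt_trans hu0 ht
      have h1 : t⁻¹ < δ := by
        have h2 : t⁻¹ < b := by
          rw [hudef] at ht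
          exact (inv_lt_comm₀ ht0 hb0).2 ht
        exact lt_trans h2 hbδ
      have := hB t⁻¹ (by positivity) h1
      rwa [inv_inv] at this
    have htail := aux_tail Γ γ C hC u hu1.le hratio'
    calc ∫⁻ r in Ioi u, ENNReal.ofReal (min (b*r) ((b*r)^2)) ∂Γ
        ≤ ∫⁻ r in Ioi u, ENNReal.ofReal b * ENNReal.ofReal r ∂Γ := by
          apply setLIntegral_mono' measurableSet_Ioi
          intro r hr
          rw [← ENNReal.ofReal_mul hb0.le]
          exact ENNReal.ofReal_le_ofReal (min_le_left _ _)
      _ = ENNReal.ofReal b * ∫⁻ r in Ioi u, ENNReal.ofReal r ∂Γ :=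
          lintegral_const_mul' _ _ ENNReal.ofReal_ne_top
      _ ≤ ENNReal.ofReal b * (C * (ENNReal.ofReal u⁻¹ * (∫⁻ r in Ioc 1 u, ENNReal.ofReal (r^2) ∂γ)
           + ∫⁻ r in Ioi u, ENNReal.ofReal r ∂γ)) := mul_le_mul_right htail _
      _ = C * ((ENNReal.ofReal b * ENNReal.ofReal u⁻¹) * (∫⁻ r in Ioc 1 u, ENNReal.ofReal (r^2) ∂γ))
          + C * (ENNReal.ofReal b * ∫⁻ r in Ioi u, ENNReal.ofReal r ∂γ) := by ring
      _ = C * (ENNReal.ofReal (b^2) * (∫⁻ r in Ioc 1 u, ENNReal.ofReal (r^2) ∂γ))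
          + C * (ENNReal.ofReal b * ∫⁻ r in Ioi u, ENNReal.ofReal r ∂γ) := by
          rw [← ENNReal.ofReal_mul hb0.le]
          congr 3
          rw [hudef, inv_inv, sq]
      _ ≤ C * Iγ + C * Iγ := add_le_add (mul_le_mul_right low2 C) (mul_le_mul_right low3 C)
  calc (∫⁻ r in Ioc 0 1, ENNReal.ofReal (min (b*r) ((b*r)^2)) ∂Γ
        + ∫⁻ r in Ioc 1 u, ENNReal.ofReal (min (b*r) ((b*r)^2)) ∂Γ)
      + ∫⁻ r in Ioi u, ENNReal.ofReal (min (b*r) ((b*r)^2)) ∂Γ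
      ≤ (((∫⁻ r in Ioc 0 1, ENNReal.ofReal (r^2) ∂Γ)
          / (∫⁻ r in Ioc 1 ε₁⁻¹, ENNReal.ofReal (r^2) ∂γ)) * Iγ + C * Iγ)
        + (C * Iγ + C * Iγ) := add_le_add (add_le_add hp1 hp2) hp3
    _ = ((∫⁻ r in Ioc 0 1, ENNReal.ofReal (r^2) ∂Γ) / (∫⁻ r in Ioc 1 ε₁⁻¹, ENNReal.ofReal (r^2) ∂γ)
        + 3*C) * Iγ := by ring

lemma aux_mid (γ Γ : Measure ℝ)
    (hγr : γ.restrict (Ioi 0) = γ) (hΓr : Γ.restrict (Ioi 0) = Γ)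
    (hmγ : (∫⁻ r, ENNReal.ofReal (min r (r^2)) ∂γ) ≠ 0)
    (hmγ' : (∫⁻ r, ENNReal.ofReal (min r (r^2)) ∂γ) ≠ ⊤)
    (ε₁ : ℝ) (hε₁ : 0 < ε₁) (hε₁1 : ε₁ ≤ 1)
    (b : ℝ) (hb1 : ε₁ ≤ b) (hb2 : b ≤ ε₁⁻¹) :
    ∫⁻ r, ENNReal.ofReal (min (b*r) ((b*r)^2)) ∂Γ ≤
      ((ENNReal.ofReal (ε₁⁻¹^2) * ∫⁻ r, ENNReal.ofReal (min r (r^2)) ∂Γ)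
        / (ENNReal.ofReal (ε₁^2) * ∫⁻ r, ENNReal.ofReal (min r (r^2)) ∂γ))
      * ∫⁻ r, ENNReal.ofReal (min (b*r) ((b*r)^2)) ∂γ := by
  have hb0 : 0 < b := lt_of_lt_of_le hε₁ hb1
  have hε₁inv : (1:ℝ) ≤ ε₁⁻¹ := (one_le_inv₀ hε₁).2 hε₁1
  have up : ∫⁻ r, ENNReal.ofReal (min (b*r) ((b*r)^2)) ∂Γ
      ≤ ENNReal.ofReal (ε₁⁻¹^2) * ∫⁻ r, ENNReal.ofReal (min r (r^2)) ∂Γ := by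
    have e1 : ∫⁻ r, ENNReal.ofReal (min (b*r) ((b*r)^2)) ∂Γ
        = ∫⁻ r in Ioi 0, ENNReal.ofReal (min (b*r) ((b*r)^2)) ∂Γ := by
      conv_lhs => rw [← hΓr]
    have e2 : ∫⁻ r, ENNReal.ofReal (min r (r^2)) ∂Γ
        = ∫⁻ r in Ioi 0, ENNReal.ofReal (min r (r^2)) ∂Γ := by
      conv_lhs => rw [← hΓr]
    rw [e1, e2, ← lintegral_const_mul' _ _ ENNReal.ofReal_ne_top]
    apply setLIntegral_mono' measurableSet_Ioi
    intro r hr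
    rw [← ENNReal.ofReal_mul (by positivity)]
    apply ENNReal.ofReal_le_ofReal
    have hmax : max b (b^2) ≤ ε₁⁻¹^2 := by
      apply max_le
      · nlinarith
      · nlinarith
    calc min (b*r) ((b*r)^2) ≤ max b (b^2) * min r (r^2) :=
        aux_min_up b r hb0.le (le_of_lt hr)
    _ ≤ ε₁⁻¹^2 * min r (r^2) :=
        mul_le_mul_of_nonneg_right hmax (le_min (le_of_lt hr) (sq_nonneg r))
  have low : ENNReal.ofReal (ε₁^2) * (∫⁻ r, ENNReal.ofReal (min r (r^2)) ∂γ)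
      ≤ ∫⁻ r, ENNReal.ofReal (min (b*r) ((b*r)^2)) ∂γ := by
    have e1 : ∫⁻ r, ENNReal.ofReal (min (b*r) ((b*r)^2)) ∂γ
        = ∫⁻ r in Ioi 0, ENNReal.ofReal (min (b*r) ((b*r)^2)) ∂γ := by
      conv_lhs => rw [← hγr]
    have e2 : ∫⁻ r, ENNReal.ofReal (min r (r^2)) ∂γ
        = ∫⁻ r in Ioi 0, ENNReal.ofReal (min r (r^2)) ∂γ := by
      conv_lhs => rw [← hγr]
    rw [e1, e2, ← lintegral_const_mul' _ _ ENNReal.ofReal_ne_top]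
    apply setLIntegral_mono' measurableSet_Ioi
    intro r hr
    rw [← ENNReal.ofReal_mul (by positivity)]
    apply ENNReal.ofReal_le_ofReal
    have hminb : ε₁^2 ≤ min b (b^2) := by
      rw [show ε₁^2 = min ε₁ (ε₁^2) from (aux_min_eq_sq hε₁.le hε₁1).symm]
      exact min_le_min hb1 (by nlinarith)
    calc ε₁^2 * min r (r^2) ≤ min b (b^2) * min r (r^2) :=
        mul_le_mul_of_nonneg_right hminb (le_min (le_of_lt hr) (sq_nonneg r))
    _ ≤ min (b*r) ((b*r)^2) := aux_min_lo b r hb0.le (le_of_lt hr)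
  have hden : ENNReal.ofReal (ε₁^2) * (∫⁻ r, ENNReal.ofReal (min r (r^2)) ∂γ) ≠ 0 := by
    apply mul_ne_zero _ hmγ
    simp only [ne_eq, ENNReal.ofReal_eq_zero, not_le]
    positivity
  have hden' : ENNReal.ofReal (ε₁^2) * (∫⁻ r, ENNReal.ofReal (min r (r^2)) ∂γ) ≠ ⊤ :=
    ENNReal.mul_ne_top ENNReal.ofReal_ne_top hmγ'
  calc ∫⁻ r, ENNReal.ofReal (min (b*r) ((b*r)^2)) ∂Γ
      ≤ ENNReal.ofReal (ε₁⁻¹^2) * ∫⁻ r, ENNReal.ofReal (min r (r^2)) ∂Γ := up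
    _ = ((ENNReal.ofReal (ε₁⁻¹^2) * ∫⁻ r, ENNReal.ofReal (min r (r^2)) ∂Γ)
        / (ENNReal.ofReal (ε₁^2) * ∫⁻ r, ENNReal.ofReal (min r (r^2)) ∂γ))
        * (ENNReal.ofReal (ε₁^2) * ∫⁻ r, ENNReal.ofReal (min r (r^2)) ∂γ) :=
        (ENNReal.div_mul_cancel hden hden').symm
    _ ≤ ((ENNReal.ofReal (ε₁⁻¹^2) * ∫⁻ r, ENNReal.ofReal (min r (r^2)) ∂Γ)
        / (ENNReal.ofReal (ε₁^2) * ∫⁻ r, ENNReal.ofReal (min r (r^2)) ∂γ))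
        * ∫⁻ r, ENNReal.ofReal (min (b*r) ((b*r)^2)) ∂γ := mul_le_mul_right low _

lemma aux_up (μ : Measure ℝ) (hμr : μ.restrict (Ioi 0) = μ) (b : ℝ) (hb : 0 ≤ b) :
    ∫⁻ r, ENNReal.ofReal (min (b*r) ((b*r)^2)) ∂μ
      ≤ ENNReal.ofReal (max b (b^2)) * ∫⁻ r, ENNReal.ofReal (min r (r^2)) ∂μ := by
  have e1 : ∫⁻ r, ENNReal.ofReal (min (b*r) ((b*r)^2)) ∂μ
      = ∫⁻ r in Ioi 0, ENNReal.ofReal (min (b*r) ((b*r)^2)) ∂μ := by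
    conv_lhs => rw [← hμr]
  have e2 : ∫⁻ r, ENNReal.ofReal (min r (r^2)) ∂μ
      = ∫⁻ r in Ioi 0, ENNReal.ofReal (min r (r^2)) ∂μ := by
    conv_lhs => rw [← hμr]
  rw [e1, e2, ← lintegral_const_mul' _ _ ENNReal.ofReal_ne_top]
  apply setLIntegral_mono' measurableSet_Ioi
  intro r hr
  rw [← ENNReal.ofReal_mul (le_trans hb (le_max_left _ _))]
  exact ENNReal.ofReal_le_ofReal (aux_min_up b r hb (le_of_lt hr))

theorem stmt_14 (γ Γ : Measure ℝ)
    (hγ0 : γ (Set.Iic 0) = 0) (hΓ0 : Γ (Set.Iic 0) = 0)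
    (hle : γ ≤ Γ)
    (hpos : 0 < ∫⁻ r, ENNReal.ofReal (min r (r ^ 2)) ∂γ)
    (hfin : ∫⁻ r, ENNReal.ofReal (min r (r ^ 2)) ∂Γ < ⊤)
    (hposε : ∃ ε₀ > (0:ℝ), ∀ ε ∈ Set.Ioo (0:ℝ) ε₀,
      0 < min (∫ r in Set.Ioc ε 1, r ∂γ) (∫ r in Set.Ioc 1 (1 / ε), r ^ 2 ∂γ))
    (hlim0 : Filter.IsBoundedUnder (· ≤ ·) (nhdsWithin 0 (Set.Ioi 0))
      (fun ε => (∫ r in Set.Ioc ε 1, r ∂Γ) / (∫ r in Set.Ioc ε 1, r ∂γ)))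
    (hliminfty : Filter.IsBoundedUnder (· ≤ ·) (nhdsWithin 0 (Set.Ioi 0))
      (fun ε => (∫ r in Set.Ioc 1 (1 / ε), r ^ 2 ∂Γ) / (∫ r in Set.Ioc 1 (1 / ε), r ^ 2 ∂γ)))
    (Jγ JΓ : ℝ → ℝ)
    (hJγ : ∀ b, Jγ b = ∫ r, (Real.exp (-(b * r)) - 1 + b * r) ∂γ)
    (hJΓ : ∀ b, JΓ b = ∫ r, (Real.exp (-(b * r)) - 1 + b * r) ∂Γ) :
    ∃ K ≥ (1:ℝ), ∀ b ≥ (0:ℝ), JΓ b ≤ K * Jγ b := by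
  have hfinγ : (∫⁻ r, ENNReal.ofReal (min r (r ^ 2)) ∂γ) < ⊤ :=
    lt_of_le_of_lt (lintegral_mono' hle le_rfl) hfin
  haveI : SigmaFinite Γ := aux_sigmaFinite Γ hΓ0 hfin
  haveI : SigmaFinite γ := aux_sigmaFinite γ hγ0 hfinγ
  have hrestr : ∀ μ : Measure ℝ, μ (Set.Iic 0) = 0 → μ.restrict (Ioi 0) = μ := by
    intro μ h0
    apply Measure.restrict_eq_self_of_ae_mem
    rw [ae_iff]
    have he : {x : ℝ | ¬ x ∈ Ioi 0} = Iic 0 := by ext x; simp [not_lt]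
    rw [he]
    exact h0
  have hγr := hrestr γ hγ0
  have hΓr := hrestr Γ hΓ0
  -- extract the filter bounds
  obtain ⟨ε₀, hε₀pos, hposA⟩ := hposε
  obtain ⟨c₁, hc₁⟩ := hlim0
  rw [Filter.eventually_map] at hc₁
  obtain ⟨d₁, hd₁, hsub₁⟩ := mem_nhdsGT_iff_exists_Ioo_subset.1 hc₁
  obtain ⟨c₂, hc₂⟩ := hliminfty
  rw [Filter.eventually_map] at hc₂
  obtain ⟨d₂, hd₂, hsub₂⟩ := mem_nhdsGT_iff_exists_Ioo_subset.1 hc₂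
  set δ : ℝ := min (min d₁ d₂) (min ε₀ 1) with hδdef
  have hδpos : 0 < δ := lt_min (lt_min hd₁ hd₂) (lt_min hε₀pos one_pos)
  have hδ1 : δ ≤ 1 := le_trans (min_le_right _ _) (min_le_right _ _)
  set C : ℝ≥0∞ := ENNReal.ofReal (max c₁ (max c₂ 1)) with hCdef
  have hmaxc1 : (1:ℝ) ≤ max c₁ (max c₂ 1) := le_trans (le_max_right c₂ 1) (le_max_right _ _)
  have hCtop : C ≠ ⊤ := ENNReal.ofReal_ne_top
  -- conversion of hypotheses to lintegral form
  have hconv : ∀ ε : ℝ, 0 < ε → ε < δ →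
      (∫⁻ r in Ioc ε 1, ENNReal.ofReal r ∂Γ ≤ C * ∫⁻ r in Ioc ε 1, ENNReal.ofReal r ∂γ) ∧
      (∫⁻ r in Ioc 1 ε⁻¹, ENNReal.ofReal (r^2) ∂Γ
        ≤ C * ∫⁻ r in Ioc 1 ε⁻¹, ENNReal.ofReal (r^2) ∂γ) ∧
      ((∫⁻ r in Ioc ε 1, ENNReal.ofReal r ∂γ) ≠ 0
        ∧ (∫⁻ r in Ioc 1 ε⁻¹, ENNReal.ofReal (r^2) ∂γ) ≠ 0) ∧
      ((∫⁻ r in Ioc ε 1, ENNReal.ofReal r ∂γ) ≠ ⊤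
        ∧ (∫⁻ r in Ioc 1 ε⁻¹, ENNReal.ofReal (r^2) ∂γ) ≠ ⊤) := by
    intro ε hε hεδ
    have hεr : ∀ μ : Measure ℝ, (∫⁻ r, ENNReal.ofReal (min r (r^2)) ∂μ) < ⊤ →
        (∫⁻ r in Ioc ε 1, ENNReal.ofReal r ∂μ) < ⊤
          ∧ (∫⁻ r in Ioc 1 ε⁻¹, ENNReal.ofReal (r^2) ∂μ) < ⊤ := by
      intro μ hμ
      constructor
      · apply aux_fin μ hμ (ENNReal.ofReal ε⁻¹) ENNReal.ofReal_ne_top _ measurableSet_Ioc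
        intro r hr
        have hr0 : (0:ℝ) < r := lt_trans hε hr.1
        rw [← ENNReal.ofReal_mul (by positivity), aux_min_eq_sq hr0.le hr.2]
        apply ENNReal.ofReal_le_ofReal
        calc r = ε⁻¹ * (ε * r) := by field_simp
        _ ≤ ε⁻¹ * r^2 := by
            apply mul_le_mul_of_nonneg_left _ (by positivity)
            have h3 : ε * r ≤ r * r := mul_le_mul_of_nonneg_right hr.1.le hr0.le
            nlinarith [h3]
      · apply aux_fin μ hμ (ENNReal.ofReal ε⁻¹) ENNReal.ofReal_ne_top _ measurableSet_Ioc
        intro r hr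
        rw [← ENNReal.ofReal_mul (by positivity), aux_min_eq_lin hr.1.le]
        apply ENNReal.ofReal_le_ofReal
        nlinarith [hr.2, lt_trans one_pos hr.1]
    have heqA : ∀ μ : Measure ℝ,
        ∫ r in Ioc ε 1, r ∂μ = (∫⁻ r in Ioc ε 1, ENNReal.ofReal r ∂μ).toReal := by
      intro μ
      rw [integral_eq_lintegral_of_nonneg_ae]
      · exact (ae_restrict_iff' measurableSet_Ioc).2
          (Filter.Eventually.of_forall (fun r hr => (lt_trans hε hr.1).le))
      · exact measurable_id.aestronglyMeasurable
    have heqB : ∀ μ : Measure ℝ,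
        ∫ r in Ioc 1 ε⁻¹, r^2 ∂μ = (∫⁻ r in Ioc 1 ε⁻¹, ENNReal.ofReal (r^2) ∂μ).toReal := by
      intro μ
      rw [integral_eq_lintegral_of_nonneg_ae]
      · exact Filter.Eventually.of_forall (fun r => sq_nonneg r)
      · exact (measurable_id.pow_const 2).aestronglyMeasurable
    have hεε₀ : ε < ε₀ :=
      lt_of_lt_of_le hεδ (le_trans (min_le_right _ _) (min_le_left _ _))
    have hεd₁ : ε < d₁ :=
      lt_of_lt_of_le hεδ (le_trans (min_le_left _ _) (min_le_left _ _))
    have hεd₂ : ε < d₂ :=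
      lt_of_lt_of_le hεδ (le_trans (min_le_left _ _) (min_le_right _ _))
    have hpos' := hposA ε ⟨hε, hεε₀⟩
    rw [one_div] at hpos'
    have hposAγ : 0 < ∫ r in Ioc ε 1, r ∂γ := lt_of_lt_of_le hpos' (min_le_left _ _)
    have hposBγ : 0 < ∫ r in Ioc 1 ε⁻¹, r^2 ∂γ := lt_of_lt_of_le hpos' (min_le_right _ _)
    have hr₁ : (∫ r in Ioc ε 1, r ∂Γ) / (∫ r in Ioc ε 1, r ∂γ) ≤ c₁ := hsub₁ ⟨hε, hεd₁⟩
    have hr₂' := hsub₂ ⟨hε, hεd₂⟩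
    simp only [one_div] at hr₂'
    have hr₂ : (∫ r in Ioc 1 ε⁻¹, r^2 ∂Γ) / (∫ r in Ioc 1 ε⁻¹, r^2 ∂γ) ≤ c₂ := hr₂'
    have hAΓfin := (hεr Γ hfin).1
    have hAγfin := (hεr γ hfinγ).1
    have hBΓfin := (hεr Γ hfin).2
    have hBγfin := (hεr γ hfinγ).2
    have h1 : ∫ r in Ioc ε 1, r ∂Γ ≤ max c₁ (max c₂ 1) * ∫ r in Ioc ε 1, r ∂γ := by
      have h2 := (div_le_iff₀ hposAγ).1 hr₁
      nlinarith [le_max_left c₁ (max c₂ 1)]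
    have h1' : ∫ r in Ioc 1 ε⁻¹, r^2 ∂Γ ≤ max c₁ (max c₂ 1) * ∫ r in Ioc 1 ε⁻¹, r^2 ∂γ := by
      have h2 := (div_le_iff₀ hposBγ).1 hr₂
      nlinarith [le_max_left c₂ (1:ℝ), le_max_right c₁ (max c₂ 1)]
    refine ⟨?_, ?_, ⟨?_, ?_⟩, ⟨hAγfin.ne, hBγfin.ne⟩⟩
    · have e1 : (∫⁻ r in Ioc ε 1, ENNReal.ofReal r ∂Γ)
          = ENNReal.ofReal (∫ r in Ioc ε 1, r ∂Γ) := by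
        rw [heqA Γ, ENNReal.ofReal_toReal hAΓfin.ne]
      have e2 : (∫⁻ r in Ioc ε 1, ENNReal.ofReal r ∂γ)
          = ENNReal.ofReal (∫ r in Ioc ε 1, r ∂γ) := by
        rw [heqA γ, ENNReal.ofReal_toReal hAγfin.ne]
      rw [e1, e2, hCdef, ← ENNReal.ofReal_mul (le_trans zero_le_one hmaxc1)]
      exact ENNReal.ofReal_le_ofReal h1
    · have e1 : (∫⁻ r in Ioc 1 ε⁻¹, ENNReal.ofReal (r^2) ∂Γ)
          = ENNReal.ofReal (∫ r in Ioc 1 ε⁻¹, r^2 ∂Γ) := by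
        rw [heqB Γ, ENNReal.ofReal_toReal hBΓfin.ne]
      have e2 : (∫⁻ r in Ioc 1 ε⁻¹, ENNReal.ofReal (r^2) ∂γ)
          = ENNReal.ofReal (∫ r in Ioc 1 ε⁻¹, r^2 ∂γ) := by
        rw [heqB γ, ENNReal.ofReal_toReal hBγfin.ne]
      rw [e1, e2, hCdef, ← ENNReal.ofReal_mul (le_trans zero_le_one hmaxc1)]
      exact ENNReal.ofReal_le_ofReal h1'
    · intro h0
      rw [heqA γ, h0] at hposAγ
      simp at hposAγ
    · intro h0
      rw [heqB γ, h0] at hposBγ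
      simp at hposBγ
  -- fix the base scale
  set ε₁ : ℝ := δ/2 with hε₁def
  have hε₁pos : 0 < ε₁ := by positivity
  have hε₁δ : ε₁ < δ := by rw [hε₁def]; linarith
  have hε₁1 : ε₁ ≤ 1 := by rw [hε₁def]; linarith
  obtain ⟨hAε₁, hBε₁, ⟨ha₁0, hb₁0⟩, ⟨ha₁t, hb₁t⟩⟩ := hconv ε₁ hε₁pos hε₁δ
  have hQfin : (∫⁻ r in Ioi 1, ENNReal.ofReal r ∂Γ) < ⊤ := by
    apply aux_fin Γ hfin 1 ENNReal.one_ne_top _ measurableSet_Ioi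
    intro r hr
    rw [one_mul, aux_min_eq_lin (le_of_lt hr)]
  have hPfin : (∫⁻ r in Ioc 0 1, ENNReal.ofReal (r^2) ∂Γ) < ⊤ := by
    apply aux_fin Γ hfin 1 ENNReal.one_ne_top _ measurableSet_Ioc
    intro r hr
    rw [one_mul, aux_min_eq_sq hr.1.le hr.2]
  set K₂ : ℝ≥0∞ :=
    (((∫⁻ r in Ioi 1, ENNReal.ofReal r ∂Γ) / (∫⁻ r in Ioc ε₁ 1, ENNReal.ofReal r ∂γ) + 3*C)
      + ((∫⁻ r in Ioc 0 1, ENNReal.ofReal (r^2) ∂Γ)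
          / (∫⁻ r in Ioc 1 ε₁⁻¹, ENNReal.ofReal (r^2) ∂γ) + 3*C))
      + ((ENNReal.ofReal (ε₁⁻¹^2) * ∫⁻ r, ENNReal.ofReal (min r (r^2)) ∂Γ)
          / (ENNReal.ofReal (ε₁^2) * ∫⁻ r, ENNReal.ofReal (min r (r^2)) ∂γ)) with hK₂def
  have hcore : ∀ b : ℝ, 0 < b →
      ∫⁻ r, ENNReal.ofReal (min (b*r) ((b*r)^2)) ∂Γ
        ≤ K₂ * ∫⁻ r, ENNReal.ofReal (min (b*r) ((b*r)^2)) ∂γ := by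
    intro b hb0
    rcases lt_or_ge b ε₁ with hcase | hcase
    · refine le_trans (aux_smallb γ Γ hΓr C hCtop δ ε₁ hε₁pos hε₁δ hδ1
        (fun e h1 h2 => (hconv e h1 h2).2.1) hb₁0 hb₁t b hb0 hcase)
        (mul_le_mul_left (le_trans le_add_self le_self_add) _)
    · rcases lt_or_ge ε₁⁻¹ b with hcase2 | hcase2
      · refine le_trans (aux_large γ Γ hΓr C hCtop δ ε₁ hε₁pos hε₁δ hδ1
          (fun e h1 h2 => (hconv e h1 h2).1) ha₁0 ha₁t b hcase2)
          (mul_le_mul_left (le_trans le_self_add le_self_add) _)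
      · refine le_trans (aux_mid γ Γ hγr hΓr hpos.ne' hfinγ.ne ε₁ hε₁pos hε₁1 b hcase hcase2)
          (mul_le_mul_left le_add_self _)
  have hK₂top : K₂ ≠ ⊤ := by
    have h3C : (3:ℝ≥0∞)*C ≠ ⊤ := ENNReal.mul_ne_top (by simp) hCtop
    have hX : ((∫⁻ r in Ioi 1, ENNReal.ofReal r ∂Γ)
        / (∫⁻ r in Ioc ε₁ 1, ENNReal.ofReal r ∂γ) + 3*C) ≠ ⊤ :=
      ENNReal.add_ne_top.2 ⟨(ENNReal.div_lt_top hQfin.ne ha₁0).ne, h3C⟩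
    have hY : ((∫⁻ r in Ioc 0 1, ENNReal.ofReal (r^2) ∂Γ)
        / (∫⁻ r in Ioc 1 ε₁⁻¹, ENNReal.ofReal (r^2) ∂γ) + 3*C) ≠ ⊤ :=
      ENNReal.add_ne_top.2 ⟨(ENNReal.div_lt_top hPfin.ne hb₁0).ne, h3C⟩
    have hZ : ((ENNReal.ofReal (ε₁⁻¹^2) * ∫⁻ r, ENNReal.ofReal (min r (r^2)) ∂Γ)
        / (ENNReal.ofReal (ε₁^2) * ∫⁻ r, ENNReal.ofReal (min r (r^2)) ∂γ)) ≠ ⊤ := by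
      apply (ENNReal.div_lt_top (ENNReal.mul_ne_top ENNReal.ofReal_ne_top hfin.ne) _).ne
      apply mul_ne_zero _ hpos.ne'
      simp only [ne_eq, ENNReal.ofReal_eq_zero, not_le]
      positivity
    rw [hK₂def]
    exact ENNReal.add_ne_top.2 ⟨ENNReal.add_ne_top.2 ⟨hX, hY⟩, hZ⟩
  -- final constant
  refine ⟨max ((K₂ * ENNReal.ofReal 4).toReal) 1, le_max_right _ _, ?_⟩
  intro b hb
  rcases hb.eq_or_lt with heq | hb0
  · rw [← heq, hJΓ, hJγ]
    simp
  · have heqJ : ∀ μ : Measure ℝ, (∫ r, (Real.exp (-(b*r)) - 1 + b*r) ∂μ)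
        = (∫⁻ r, ENNReal.ofReal (Real.exp (-(b*r)) - 1 + b*r) ∂μ).toReal := by
      intro μ
      rw [integral_eq_lintegral_of_nonneg_ae]
      · exact Filter.Eventually.of_forall (fun r => aux_f_nonneg (b*r))
      · exact ((Real.measurable_exp.comp ((measurable_const.mul measurable_id).neg)).sub
          measurable_const).add (measurable_const.mul measurable_id) |>.aestronglyMeasurable
    have hUB : ∀ μ : Measure ℝ, μ.restrict (Ioi 0) = μ →
        (∫⁻ r, ENNReal.ofReal (Real.exp (-(b*r)) - 1 + b*r) ∂μ)
          ≤ ∫⁻ r, ENNReal.ofReal (min (b*r) ((b*r)^2)) ∂μ := by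
      intro μ hμr
      have e1 : ∫⁻ r, ENNReal.ofReal (Real.exp (-(b*r)) - 1 + b*r) ∂μ
          = ∫⁻ r in Ioi 0, ENNReal.ofReal (Real.exp (-(b*r)) - 1 + b*r) ∂μ := by
        conv_lhs => rw [← hμr]
      have e2 : ∫⁻ r, ENNReal.ofReal (min (b*r) ((b*r)^2)) ∂μ
          = ∫⁻ r in Ioi 0, ENNReal.ofReal (min (b*r) ((b*r)^2)) ∂μ := by
        conv_lhs => rw [← hμr]
      rw [e1, e2]
      apply setLIntegral_mono' measurableSet_Ioi
      intro r hr
      exact ENNReal.ofReal_le_ofReal (aux_f_le (b*r) (mul_pos hb0 hr).le)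
    have hLB : ∫⁻ r, ENNReal.ofReal (min (b*r) ((b*r)^2)) ∂γ
        ≤ ENNReal.ofReal 4 * ∫⁻ r, ENNReal.ofReal (Real.exp (-(b*r)) - 1 + b*r) ∂γ := by
      have e1 : ∫⁻ r, ENNReal.ofReal (min (b*r) ((b*r)^2)) ∂γ
          = ∫⁻ r in Ioi 0, ENNReal.ofReal (min (b*r) ((b*r)^2)) ∂γ := by
        conv_lhs => rw [← hγr]
      have e2 : ∫⁻ r, ENNReal.ofReal (Real.exp (-(b*r)) - 1 + b*r) ∂γ
          = ∫⁻ r in Ioi 0, ENNReal.ofReal (Real.exp (-(b*r)) - 1 + b*r) ∂γ := by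
        conv_lhs => rw [← hγr]
      rw [e1, e2, ← lintegral_const_mul' _ _ ENNReal.ofReal_ne_top]
      apply setLIntegral_mono' measurableSet_Ioi
      intro r hr
      rw [← ENNReal.ofReal_mul (by norm_num)]
      exact ENNReal.ofReal_le_ofReal (aux_f_ge (b*r) (mul_pos hb0 hr).le)
    have hIγfin : (∫⁻ r, ENNReal.ofReal (min (b*r) ((b*r)^2)) ∂γ) < ⊤ :=
      lt_of_le_of_lt (aux_up γ hγr b hb0.le)
        (ENNReal.mul_lt_top ENNReal.ofReal_lt_top hfinγ)
    have hLγfin : (∫⁻ r, ENNReal.ofReal (Real.exp (-(b*r)) - 1 + b*r) ∂γ) ≠ ⊤ :=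
      (lt_of_le_of_lt (hUB γ hγr) hIγfin).ne
    have hchain : (∫⁻ r, ENNReal.ofReal (Real.exp (-(b*r)) - 1 + b*r) ∂Γ)
        ≤ (K₂ * ENNReal.ofReal 4) * ∫⁻ r, ENNReal.ofReal (Real.exp (-(b*r)) - 1 + b*r) ∂γ := by
      calc (∫⁻ r, ENNReal.ofReal (Real.exp (-(b*r)) - 1 + b*r) ∂Γ)
          ≤ ∫⁻ r, ENNReal.ofReal (min (b*r) ((b*r)^2)) ∂Γ := hUB Γ hΓr
        _ ≤ K₂ * ∫⁻ r, ENNReal.ofReal (min (b*r) ((b*r)^2)) ∂γ := hcore b hb0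
        _ ≤ K₂ * (ENNReal.ofReal 4
            * ∫⁻ r, ENNReal.ofReal (Real.exp (-(b*r)) - 1 + b*r) ∂γ) := mul_le_mul_right hLB K₂
        _ = (K₂ * ENNReal.ofReal 4)
            * ∫⁻ r, ENNReal.ofReal (Real.exp (-(b*r)) - 1 + b*r) ∂γ := by ring
    rw [hJΓ, hJγ, heqJ Γ, heqJ γ]
    calc (∫⁻ r, ENNReal.ofReal (Real.exp (-(b*r)) - 1 + b*r) ∂Γ).toReal
        ≤ ((K₂ * ENNReal.ofReal 4)
            * ∫⁻ r, ENNReal.ofReal (Real.exp (-(b*r)) - 1 + b*r) ∂γ).toReal :=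
          ENNReal.toReal_mono
            (ENNReal.mul_ne_top (ENNReal.mul_ne_top hK₂top ENNReal.ofReal_ne_top) hLγfin) hchain
      _ = (K₂ * ENNReal.ofReal 4).toReal
          * (∫⁻ r, ENNReal.ofReal (Real.exp (-(b*r)) - 1 + b*r) ∂γ).toReal :=
          ENNReal.toReal_mul
      _ ≤ max ((K₂ * ENNReal.ofReal 4).toReal) 1
          * (∫⁻ r, ENNReal.ofReal (Real.exp (-(b*r)) - 1 + b*r) ∂γ).toReal :=
          mul_le_mul_of_nonneg_right (le_max_left _ _) ENNReal.toReal_nonneg
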